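/- arXiv:2410.16142 — 2 statements merged into one kernel-verified Lean document; each statement's English description precedes it below -/
import Mathlib

section
/- Let D be an integral domain with quotient field K, E ⊆ K nonempty, and D' the integral closure of D in K. If Int^R(E,D) contains a non-constant polynomial, then E is a fractional subset of D', i.e., there is a nonzero a ∈ D with aE ⊆ D'. -/
open Polynomial

variable {K : Type*} [Field K]

/-- Evaluation of a rational function at a point of `K`. -/
noncomputable def rfEval (e : K) (φ : RatFunc K) : K :=
  RatFunc.eval (RingHom.id K) e φ

/-- `φ` is defined at every point of `E` (its reduced denominator does not vanish)
and maps `E` into `T`. -/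
def MapsInto (E T : Set K) (φ : RatFunc K) : Prop :=
  ∀ e ∈ E, Polynomial.eval e φ.denom ≠ 0 ∧ rfEval e φ ∈ T

theorem eval₂_id_eq_eval (e : K) (p : K[X]) :
    p.eval₂ (RingHom.id K) e = p.eval e := by first | rfl | simp

theorem denom_eval_ne_zero_of_dvd {x y z : RatFunc K} (h : z.denom ∣ x.denom * y.denom)
    {e : K} (hx : Polynomial.eval e x.denom ≠ 0) (hy : Polynomial.eval e y.denom ≠ 0) :
    Polynomial.eval e z.denom ≠ 0 := by
  obtain ⟨c, hc⟩ := h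
  intro h0
  apply mul_ne_zero hx hy
  have : Polynomial.eval e (x.denom * y.denom) = Polynomial.eval e z.denom * Polynomial.eval e c := by
    rw [hc, Polynomial.eval_mul]
  rw [Polynomial.eval_mul] at this
  rw [this, h0, zero_mul]

theorem rfEval_add {x y : RatFunc K} {e : K} (hx : Polynomial.eval e x.denom ≠ 0)
    (hy : Polynomial.eval e y.denom ≠ 0) : rfEval e (x + y) = rfEval e x + rfEval e y := by
  apply RatFunc.eval_add <;> rw [eval₂_id_eq_eval] <;> assumption

theorem rfEval_mul {x y : RatFunc K} {e : K} (hx : Polynomial.eval e x.denom ≠ 0)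
    (hy : Polynomial.eval e y.denom ≠ 0) : rfEval e (x * y) = rfEval e x * rfEval e y := by
  apply RatFunc.eval_mul <;> rw [eval₂_id_eq_eval] <;> assumption

theorem denom_const (c : K) : (algebraMap K (RatFunc K) c).denom = 1 := by
  have : algebraMap K (RatFunc K) c = algebraMap K[X] (RatFunc K) (Polynomial.C c) := by
    rw [RatFunc.algebraMap_C]; rfl
  rw [this, RatFunc.denom_algebraMap]

theorem rfEval_const (e c : K) : rfEval e (algebraMap K (RatFunc K) c) = c := by
  have : algebraMap K (RatFunc K) c = RatFunc.C c := rfl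
  rw [rfEval, this, RatFunc.eval_C]; rfl

/-- The ring of `D`-valued rational functions on `E`:
`Int^R(E,D) = {φ ∈ K(X) : φ(E) ⊆ D}`. -/
def IntR (E : Set K) (D : Subring K) : Subring (RatFunc K) where
  carrier := {φ | MapsInto E (D : Set K) φ}
  zero_mem' := by
    intro e _
    constructor
    · rw [RatFunc.denom_zero]; simp
    · have : rfEval e (0 : RatFunc K) = 0 := by rw [rfEval, RatFunc.eval_zero]
      rw [this]; exact D.zero_mem
  one_mem' := by
    intro e _
    constructor
    · rw [RatFunc.denom_one]; simp
    · have : rfEval e (1 : RatFunc K) = 1 := by rw [rfEval, RatFunc.eval_one]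
      rw [this]; exact D.one_mem
  add_mem' := by
    intro x y hx hy e he
    obtain ⟨hxd, hxv⟩ := hx e he
    obtain ⟨hyd, hyv⟩ := hy e he
    refine ⟨denom_eval_ne_zero_of_dvd (RatFunc.denom_add_dvd x y) hxd hyd, ?_⟩
    rw [rfEval_add hxd hyd]; exact D.add_mem hxv hyv
  mul_mem' := by
    intro x y hx hy e he
    obtain ⟨hxd, hxv⟩ := hx e he
    obtain ⟨hyd, hyv⟩ := hy e he
    refine ⟨denom_eval_ne_zero_of_dvd (RatFunc.denom_mul_dvd x y) hxd hyd, ?_⟩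
    rw [rfEval_mul hxd hyd]; exact D.mul_mem hxv hyv
  neg_mem' := by
    intro x hx e he
    obtain ⟨hxd, hxv⟩ := hx e he
    have hconst : Polynomial.eval e (algebraMap K (RatFunc K) (-1 : K)).denom ≠ 0 := by
      rw [denom_const]; simp
    have hneg : -x = algebraMap K (RatFunc K) (-1 : K) * x := by
      rw [map_neg, map_one, neg_one_mul]
    constructor
    · rw [hneg]
      exact denom_eval_ne_zero_of_dvd (RatFunc.denom_mul_dvd _ x)
        (by rw [denom_const]; simp) hxd
    · rw [hneg, rfEval_mul hconst hxd, rfEval_const]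
      rw [neg_one_mul]
      exact D.neg_mem hxv

theorem mem_IntR_iff {E : Set K} {D : Subring K} {φ : RatFunc K} :
    φ ∈ IntR E D ↔ MapsInto E (D : Set K) φ := Iff.rfl

theorem const_mem_IntR {E : Set K} {D : Subring K} {d : K} (hd : d ∈ D) :
    algebraMap K (RatFunc K) d ∈ IntR E D := by
  intro e _
  refine ⟨by rw [denom_const]; simp, ?_⟩
  rw [rfEval_const]; exact hd

/-- The canonical map `D → Int^R(E,D)` sending `d` to the constant rational function `d`. -/
noncomputable def constHom (E : Set K) (D : Subring K) : D →+* IntR E D where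
  toFun d := ⟨algebraMap K (RatFunc K) (d : K), const_mem_IntR d.2⟩
  map_one' := by ext; simp
  map_mul' x y := by ext; simp
  map_zero' := by ext; simp
  map_add' x y := by ext; simp

/-- Evaluation at a point `a ∈ E`, as a ring homomorphism `Int^R(E,D) → D`. -/
noncomputable def evalHom (E : Set K) (D : Subring K) (a : K) (ha : a ∈ E) :
    IntR E D →+* D where
  toFun φ := ⟨rfEval a φ.1, (φ.2 a ha).2⟩
  map_one' := by
    ext
    show rfEval a (1 : RatFunc K) = 1
    rw [rfEval, RatFunc.eval_one]
  map_mul' x y := by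
    ext
    exact rfEval_mul (x.2 a ha).1 (y.2 a ha).1
  map_zero' := by
    ext
    show rfEval a (0 : RatFunc K) = 0
    rw [rfEval, RatFunc.eval_zero]
  map_add' x y := by
    ext
    exact rfEval_add (x.2 a ha).1 (y.2 a ha).1

/-- `K` is the quotient field of `D`. -/
def IsQuotField (D : Subring K) : Prop :=
  ∀ x : K, ∃ a ∈ D, ∃ b ∈ D, b ≠ 0 ∧ x = a / b
/-- The localization `S⁻¹A` of a subring `A` of a field at a multiplicative submonoid
`S` of `A` not containing `0`, realized as a subring of the ambient field. -/
def locSubring {F : Type*} [Field F] (A : Subring F) (S : Submonoid A)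
    (hS : ∀ s ∈ S, s ≠ (0 : A)) : Subring F where
  carrier := {x | ∃ a : A, ∃ s ∈ S, x = (a : F) / (s : F)}
  zero_mem' := ⟨0, 1, S.one_mem, by simp⟩
  one_mem' := ⟨1, 1, S.one_mem, by simp⟩
  add_mem' := by
    rintro x y ⟨a, s, hs, rfl⟩ ⟨b, t, ht, rfl⟩
    refine ⟨a * t + b * s, s * t, S.mul_mem hs ht, ?_⟩
    have hs0 : (s : F) ≠ 0 := fun h => hS s hs (Subtype.ext h)
    have ht0 : (t : F) ≠ 0 := fun h => hS t ht (Subtype.ext h)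
    push_cast
    field_simp
  mul_mem' := by
    rintro x y ⟨a, s, hs, rfl⟩ ⟨b, t, ht, rfl⟩
    refine ⟨a * b, s * t, S.mul_mem hs ht, ?_⟩
    push_cast
    field_simp
  neg_mem' := by
    rintro x ⟨a, s, hs, rfl⟩
    exact ⟨-a, s, hs, by push_cast; ring⟩

/-- The "inverse" `{x ∈ F : xS ⊆ A}` of a subset `S` of a field `F`, relative to
a subring `A` of `F`. -/
def dualSet {F : Type*} [Field F] (A : Subring F) (S : Set F) : Set F :=
  {x | ∀ y ∈ S, x * y ∈ A}

/-- An ideal of a subring of `F`, viewed as a subset of `F`. -/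
def idealSet {F : Type*} [Field F] (A : Subring F) (I : Ideal A) : Set F :=
  (fun a : A => (a : F)) '' (I : Set A)

/-- The `v`-closure (divisorial closure) of a subset of `F` relative to a subring `A`. -/
def vSet {F : Type*} [Field F] (A : Subring F) (S : Set F) : Set F :=
  dualSet A (dualSet A S)

/-- The `t`-closure of an ideal of a subring `A` of `F`, as a subset of `F`. -/
def tSet {F : Type*} [Field F] (A : Subring F) (I : Ideal A) : Set F :=
  {x | ∃ J : Ideal A, J ≤ I ∧ J.FG ∧ J ≠ ⊥ ∧ x ∈ vSet A (idealSet A J)}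

theorem primeCompl_ne_zero {R : Type*} [CommRing R] [Nontrivial R] (P : Ideal R) [P.IsPrime] :
    ∀ s ∈ P.primeCompl, s ≠ (0 : R) := by
  intro s hs h0
  exact hs (by rw [h0]; exact P.zero_mem)

/-- Common denominator lemma. -/
theorem common_denom {K : Type*} [Field K] (D : Subring K) (hFrac : IsQuotField D)
    (s : Finset K) : ∃ d : K, d ∈ D ∧ d ≠ 0 ∧ ∀ x ∈ s, d * x ∈ D := by
  classical
  induction s using Finset.induction_on with
  | empty => exact ⟨1, D.one_mem, one_ne_zero, by simp⟩
  | insert c s hx ih =>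
    obtain ⟨d, hd, hd0, hds⟩ := ih
    obtain ⟨a, ha, b, hb, hb0, hcb⟩ := hFrac c
    refine ⟨b * d, D.mul_mem hb hd, mul_ne_zero hb0 hd0, ?_⟩
    intro x hxmem
    rcases Finset.mem_insert.mp hxmem with rfl | hxs
    · have hx2 : b * d * x = d * a := by rw [hcb]; field_simp
      rw [hx2]; exact D.mul_mem hd ha
    · have hx2 : b * d * x = b * (d * x) := by ring
      rw [hx2]; exact D.mul_mem hb (hds x hxs)

/-- if `Int^R(E,D)` contains a non-constant polynomial, then `E` is a
fractional subset of the integral closure `D'` of `D` in `K`. -/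
theorem fractional_of_nonconstant_poly_mem {K : Type*} [Field K] (D : Subring K) (E : Set K)
    (hFrac : IsQuotField D) (hEne : E.Nonempty)
    (h : ∃ p : Polynomial K, 0 < p.natDegree ∧
      algebraMap (Polynomial K) (RatFunc K) p ∈ IntR E D) :
    ∃ a : K, a ∈ D ∧ a ≠ 0 ∧ ∀ e ∈ E, a * e ∈ integralClosure D K := by
  classical
  obtain ⟨p, hdeg, hp⟩ := h
  have hpev : ∀ e ∈ E, p.eval e ∈ D := by
    intro e he
    have h2 := (hp e he).2
    rwa [rfEval, RatFunc.eval_algebraMap, show algebraMap K[X] K[X] p = p from rfl,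
      eval₂_id_eq_eval] at h2
  -- find a common denominator for the coefficients of p
  obtain ⟨d, hd, hd0, hds⟩ := common_denom D hFrac p.coeffs
  set q : K[X] := Polynomial.C d * p with hq
  have hpne : p ≠ 0 := fun h0 => by simp [h0] at hdeg
  have hqcoeff : ∀ i, q.coeff i ∈ D := by
    intro i
    rw [hq, Polynomial.coeff_C_mul]
    by_cases h0 : p.coeff i = 0
    · rw [h0, mul_zero]; exact D.zero_mem
    · exact hds _ (p.coeff_mem_coeffs h0)
  have hqdeg : q.natDegree = p.natDegree := Polynomial.natDegree_C_mul hd0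
  have hqne : q ≠ 0 := mul_ne_zero (by simpa using hd0) hpne
  refine ⟨q.leadingCoeff, by rw [Polynomial.leadingCoeff]; exact hqcoeff _,
    Polynomial.leadingCoeff_ne_zero.mpr hqne, ?_⟩
  intro e he
  set r : K[X] := q - Polynomial.C (q.eval e) with hr
  have hre : r.eval e = 0 := by simp [hr]
  have hqev : q.eval e ∈ D := by
    rw [hq, Polynomial.eval_mul, Polynomial.eval_C]
    exact D.mul_mem hd (hpev e he)
  have hrcoeff : ∀ i, r.coeff i ∈ D := by
    intro i
    rw [hr, Polynomial.coeff_sub, Polynomial.coeff_C]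
    split_ifs with h0
    · exact D.sub_mem (hqcoeff i) hqev
    · simpa using hqcoeff i
  have hrcoeffs : (↑r.coeffs : Set K) ⊆ D := by
    intro x hx
    obtain ⟨n, _, rfl⟩ := Polynomial.mem_coeffs_iff.mp hx
    exact hrcoeff n
  have hrdeg : r.natDegree = q.natDegree := Polynomial.natDegree_sub_C
  have hrlead : r.leadingCoeff = q.leadingCoeff := by
    rw [Polynomial.leadingCoeff, hrdeg, hr, Polynomial.coeff_sub, Polynomial.coeff_C,
      if_neg (by omega : ¬ q.natDegree = 0), sub_zero, Polynomial.leadingCoeff]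
  set r' : (↥D)[X] := r.toSubring D hrcoeffs with hr'
  have hmap : r'.map (algebraMap (↥D) K) = r := by
    rw [show (algebraMap (↥D) K) = D.subtype from rfl]
    exact Polynomial.map_toSubring r D hrcoeffs
  have haev : Polynomial.aeval e r' = 0 := by
    rw [Polynomial.aeval_def, Polynomial.eval₂_eq_eval_map, hmap, hre]
  have hint : IsIntegral (↥D) (r'.leadingCoeff • e) :=
    isIntegral_leadingCoeff_smul r' e haev
  have hlead : (r'.leadingCoeff : K) = q.leadingCoeff := by
    rw [← hrlead, Polynomial.leadingCoeff, Polynomial.leadingCoeff,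
      Polynomial.natDegree_toSubring, Polynomial.coeff_toSubring]
  have : (r'.leadingCoeff • e : K) = q.leadingCoeff * e := by
    rw [Algebra.smul_def, show (algebraMap (↥D) K) = D.subtype from rfl,
      Subring.coe_subtype, hlead]
  rw [← this]
  exact hint
end

section
/- Let D be an integral domain with quotient field K and E ⊆ K nonempty. The D-module Int^R(E,D) is flat if and only if it is faithfully flat. (Key step: for every maximal ideal 𝔪 of D, 𝔪·Int^R(E,D) ≠ Int^R(E,D).) -/
open Polynomial

variable {K : Type*} [Field K]

/-- `Int^R(E,D)` is a `D`-algebra (hence a `D`-module) via the constant embedding. -/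
noncomputable instance intRAlgebra {K : Type*} [Field K] (E : Set K) (D : Subring K) :
    Algebra D (IntR E D) :=
  (constHom E D).toAlgebra

/-- the `D`-module `Int^R(E,D)` is flat iff it is faithfully flat. -/
theorem intR_flat_iff_faithfullyFlat {K : Type*} [Field K] (D : Subring K) (E : Set K)
    (hFrac : IsQuotField D) (hEne : E.Nonempty) :
    Module.Flat D (IntR E D) ↔ Module.FaithfullyFlat D (IntR E D) := by
  constructor
  · intro hflat
    obtain ⟨a, ha⟩ := hEne
    refine ⟨fun m hm hheq => ?_⟩
    let L : IntR E D →ₗ[D] D :=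
      { toFun := evalHom E D a ha
        map_add' := map_add _
        map_smul' := by
          intro d x
          show evalHom E D a ha (constHom E D d * x) = d * evalHom E D a ha x
          rw [map_mul]
          congr 1
          ext
          exact rfEval_const a d }
    have h1 : (1 : IntR E D) ∈ (m • ⊤ : Submodule D (IntR E D)) := by rw [hheq]; exact Submodule.mem_top
    have hmem : L 1 ∈ m := by
      refine Submodule.smul_induction_on h1 (fun r hr n _ => ?_) (fun x y hx hy => ?_)
      · rw [map_smul, smul_eq_mul]
        exact Ideal.mul_mem_right _ m hr
      · rw [map_add]; exact m.add_mem hx hy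
    have hL1 : L 1 = 1 := map_one (evalHom E D a ha)
    exact hm.ne_top ((Ideal.eq_top_iff_one m).2 (hL1 ▸ hmem))
  · intro h
    exact h.toFlat
end
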